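/- Let G be a locally compact group and μ a non-degenerate probability measure on G (meaning: for every non-zero non-negative continuous function f vanishing at infinity, there exists n ∈ ℕ with ∫ f dμⁿ ≠ 0, where μⁿ is the n-fold convolution). If h : G → ℝ is a continuous bounded μ-harmonic function (h(s) = ∫ h(st) dμ(t) for all s) that attains its supremum norm at some point of G, and ‖h‖ = h(s₀) = 1 for some s₀, then h is constant equal to 1. -/

import Mathlib

open MeasureTheory

/-- The convolution of two Borel measures on a (multiplicative) group. -/
noncomputable def measConv {G : Type*} [Group G] [MeasurableSpace G]
    (μ ν : Measure G) : Measure G :=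
  (μ.prod ν).map (fun p : G × G => p.1 * p.2)

/-- The `n`-fold convolution power `μⁿ` of a measure, `μ¹ = μ`, `μ^{n+1} = μⁿ ∗ μ`. -/
noncomputable def measConvPow {G : Type*} [Group G] [MeasurableSpace G]
    (μ : Measure G) : ℕ → Measure G
  | 0 => μ
  | n + 1 => measConv (measConvPow μ n) μ

/-- Let `G` be a locally compact group and `μ` a non-degenerate probability measure on `G`
(for every non-zero non-negative `f ∈ C₀(G)` some convolution power `μⁿ` integrates `f`
to a non-zero value).  If `h : G → ℝ` is a continuous bounded `μ`-harmonic function with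
`‖h‖ = 1` attained at some point `s₀` (i.e. `h(s₀) = 1 = sup |h|`), then `h ≡ 1`. -/
theorem harmonic_attaining_norm_is_constant
    {G : Type*} [Group G] [TopologicalSpace G] [IsTopologicalGroup G]
    [LocallyCompactSpace G] [MeasurableSpace G] [BorelSpace G]
    (μ : Measure G) [IsProbabilityMeasure μ]
    (hnondeg : ∀ f : ZeroAtInftyContinuousMap G ℝ, (∀ x, 0 ≤ f x) → f ≠ 0 →
      ∃ n : ℕ, ∫ x, f x ∂(measConvPow μ n) ≠ 0)
    (h : G → ℝ) (hcont : Continuous h)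
    (hbdd : ∀ s : G, |h s| ≤ 1)
    (hharm : ∀ s : G, h s = ∫ t, h (s * t) ∂μ)
    (s₀ : G) (hs₀ : h s₀ = 1) :
    ∀ s : G, h s = 1 := by
  -- general integrability helper
  have intg : ∀ (ν : Measure G) [IsFiniteMeasure ν] (f : G → ℝ), Continuous f →
      ∀ C : ℝ, (∀ x, |f x| ≤ C) → Integrable f ν := by
    intro ν _ f hf C hC
    exact Integrable.mono' (integrable_const C) hf.aestronglyMeasurable
      (Filter.Eventually.of_forall fun x => by simpa [Real.norm_eq_abs] using hC x)
  have hcont₀ : Continuous fun x => h (s₀ * x) := hcont.comp (continuous_const.mul continuous_id)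
  -- key induction: μⁿ has mass ≤ 1 and ∫ h(s₀ x) dμⁿ = mass
  have key : ∀ n : ℕ, (measConvPow μ n) Set.univ ≤ 1 ∧
      ∫ x, h (s₀ * x) ∂(measConvPow μ n) = ((measConvPow μ n) Set.univ).toReal := by
    intro n
    induction n with
    | zero =>
      constructor
      · simp [measConvPow]
      · show ∫ x, h (s₀ * x) ∂μ = (μ Set.univ).toReal
        rw [← hharm s₀, hs₀]; simp
    | succ n ih =>
      set ν := measConvPow μ n with hν
      haveI : IsFiniteMeasure ν := ⟨lt_of_le_of_lt ih.1 ENNReal.one_lt_top⟩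
      set m : G × G → G := fun p => p.1 * p.2 with hm
      have heq : measConvPow μ (n + 1) = (ν.prod μ).map m := rfl
      by_cases hmeas : AEMeasurable m (ν.prod μ)
      · have huniv : ((ν.prod μ).map m) Set.univ = ν Set.univ := by
          rw [Measure.map_apply_of_aemeasurable hmeas MeasurableSet.univ]
          rw [Set.preimage_univ, ← Set.univ_prod_univ, Measure.prod_prod, measure_univ (μ := μ), mul_one]
        constructor
        · rw [heq, huniv]; exact ih.1
        · rw [heq, huniv]
          have hf : AEStronglyMeasurable (fun x => h (s₀ * x)) ((ν.prod μ).map m) :=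
            hcont₀.aestronglyMeasurable
          rw [integral_map hmeas hf]
          have hint : Integrable (fun p : G × G => h (s₀ * m p)) (ν.prod μ) := by
            refine Integrable.mono' (integrable_const 1)
              ((hcont₀.measurable.comp_aemeasurable hmeas).aestronglyMeasurable)
              (Filter.Eventually.of_forall fun p => by
                simpa [Real.norm_eq_abs] using hbdd (s₀ * m p))
          rw [MeasureTheory.integral_prod _ hint]
          have : ∀ x : G, ∫ y, h (s₀ * m (x, y)) ∂μ = h (s₀ * x) := by
            intro x
            simp only [hm, ← mul_assoc]
            exact (hharm (s₀ * x)).symm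
          rw [show (fun x => ∫ y, h (s₀ * m (x, y)) ∂μ) = fun x => h (s₀ * x) from
            funext this]
          exact ih.2
      · rw [heq, Measure.map_of_not_aemeasurable hmeas]
        simp
  -- hence ∫ (1 - h(s₀ x)) dμⁿ = 0
  have hzero : ∀ n : ℕ, ∫ x, (1 - h (s₀ * x)) ∂(measConvPow μ n) = 0 := by
    intro n
    haveI : IsFiniteMeasure (measConvPow μ n) :=
      ⟨lt_of_le_of_lt (key n).1 ENNReal.one_lt_top⟩
    rw [integral_sub (integrable_const 1)
      (intg _ (fun x => h (s₀ * x)) hcont₀ 1 (fun x => hbdd _))]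
    rw [(key n).2, integral_const]
    simp [Measure.real]
  -- now conclude
  intro s
  by_contra hne
  have hle : h s ≤ 1 := (abs_le.mp (hbdd s)).2
  have hslt : h s < 1 := lt_of_le_of_ne hle hne
  set x₁ : G := s₀⁻¹ * s with hx₁
  set g : G → ℝ := fun x => 1 - h (s₀ * x) with hg
  have hgcont : Continuous g := continuous_const.sub hcont₀
  have hgnn : ∀ x, 0 ≤ g x := fun x => by
    have := (abs_le.mp (hbdd (s₀ * x))).2; simpa [hg] using this
  set ε : ℝ := 1 - h s with hε
  have hεpos : 0 < ε := by simpa [hε] using hslt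
  have hgx₁ : g x₁ = ε := by simp [hg, hx₁, hε]
  set U : Set G := {x | ε / 2 < g x} with hU
  have hUopen : IsOpen U := isOpen_lt continuous_const hgcont
  have hx₁U : x₁ ∈ U := by
    simp only [hU, Set.mem_setOf_eq, hgx₁]
    linarith
  obtain ⟨f, hf1, hf0, hfc, hf01⟩ :=
    exists_continuous_one_zero_of_isCompact (isCompact_singleton (x := x₁))
      hUopen.isClosed_compl (by simpa [Set.disjoint_singleton_left] using hx₁U)
  set F : ZeroAtInftyContinuousMap G ℝ :=
    { toFun := fun x => ε / 2 * f x
      continuous_toFun := continuous_const.mul f.continuous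
      zero_at_infty' := by
        have := hfc.is_zero_at_infty.const_mul (ε / 2)
        simpa using this } with hF
  have hFnn : ∀ x, 0 ≤ F x := fun x =>
    mul_nonneg (by linarith) (hf01 x).1
  have hFne : F ≠ 0 := by
    intro h0
    have : F x₁ = 0 := by rw [h0]; rfl
    have hfx₁ : f x₁ = 1 := hf1 rfl
    rw [hF] at this
    simp only [ZeroAtInftyContinuousMap.coe_mk] at this
    rw [hfx₁, mul_one] at this
    linarith
  have hFle : ∀ x, F x ≤ g x := by
    intro x
    by_cases hx : x ∈ U
    · have h1 : F x ≤ ε / 2 := by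
        have := (hf01 x).2
        calc ε / 2 * f x ≤ ε / 2 * 1 := by
              apply mul_le_mul_of_nonneg_left this (by linarith)
          _ = ε / 2 := mul_one _
      have h2 : ε / 2 < g x := hx
      exact h1.trans h2.le
    · have : f x = 0 := hf0 hx
      show ε / 2 * f x ≤ g x
      rw [this, mul_zero]
      exact hgnn x
  obtain ⟨n, hn⟩ := hnondeg F hFnn hFne
  apply hn
  haveI : IsFiniteMeasure (measConvPow μ n) :=
    ⟨lt_of_le_of_lt (key n).1 ENNReal.one_lt_top⟩
  have hFint : Integrable (fun x => F x) (measConvPow μ n) := by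
    refine intg _ _ F.continuous (ε / 2) fun x => ?_
    rw [abs_of_nonneg (hFnn x)]
    show ε / 2 * f x ≤ ε / 2
    calc ε / 2 * f x ≤ ε / 2 * 1 := mul_le_mul_of_nonneg_left (hf01 x).2 (by linarith)
      _ = ε / 2 := mul_one _
  have hgint : Integrable g (measConvPow μ n) := by
    refine intg _ _ hgcont 2 fun x => ?_
    have h2 := abs_le.mp (hbdd (s₀ * x))
    rw [show g x = 1 - h (s₀ * x) from rfl, abs_le]
    constructor <;> [linarith [h2.2]; linarith [h2.1]]
  have h1 : ∫ x, F x ∂(measConvPow μ n) ≤ ∫ x, g x ∂(measConvPow μ n) :=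
    integral_mono hFint hgint hFle
  have h2 : 0 ≤ ∫ x, F x ∂(measConvPow μ n) :=
    integral_nonneg hFnn
  have h3 : ∫ x, g x ∂(measConvPow μ n) = 0 := hzero n
  linarith
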